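/- Let g(t) = (6/π²) for 0 < t ≤ 1, and g(t) = (6/π²)·(1/t + 2(1 − 1/t)² log(1 − 1/t) − (1/2)(1 − 2/t)² log|1 − 2/t|) for t > 1. Then for t ≥ 2, g(t) = (24/(π² t²)) · ∑_{n=1}^∞ (2ⁿ − 1)/(n(n+1)(n+2) tⁿ). -/

import Mathlib

open Real Filter

private lemma hasSum_cubic_lt {y : ℝ} (hy : |y| < 1) :
    HasSum (fun n : ℕ => y ^ (n + 3) / (((n : ℝ) + 1) * ((n : ℝ) + 2) * ((n : ℝ) + 3)))
      (-(1/2) * (1 - y) ^ 2 * Real.log (1 - y) + 3/4 * y ^ 2 - y / 2) := by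
  have S := Real.hasSum_pow_div_log_of_abs_lt_one hy
  set f : ℕ → ℝ := fun n => y ^ (n + 1) / (n + 1) with hf
  have h1 : HasSum (fun n => f (n + 1)) (-Real.log (1 - y) - y) := by
    rw [hasSum_nat_add_iff 1]
    convert S using 1
    · rfl
    simp only [hf, Finset.sum_range_succ, Finset.sum_range_zero]
    norm_num
  have h2 : HasSum (fun n => f (n + 2)) (-Real.log (1 - y) - y - y ^ 2 / 2) := by
    rw [hasSum_nat_add_iff 2]
    convert S using 1
    · rfl
    simp only [hf, Finset.sum_range_succ, Finset.sum_range_zero]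
    push_cast
    ring
  have comb := ((S.mul_left (y ^ 2 / 2)).sub (h1.mul_left y)).add (h2.mul_left (1/2))
  convert comb using 1
  · rfl
  · funext n
    have hn1 : ((n : ℝ) + 1) ≠ 0 := by positivity
    have hn2 : ((n : ℝ) + 2) ≠ 0 := by positivity
    have hn3 : ((n : ℝ) + 3) ≠ 0 := by positivity
    simp only [hf]
    push_cast
    field_simp
    ring
  · ring

private lemma hasSum_cubic_one :
    HasSum (fun n : ℕ => (1 : ℝ) / (((n : ℝ) + 1) * ((n : ℝ) + 2) * ((n : ℝ) + 3))) (1/4) := by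
  have hnn : ∀ n : ℕ, (0 : ℝ) ≤ 1 / (((n : ℝ) + 1) * ((n : ℝ) + 2) * ((n : ℝ) + 3)) := by
    intro n; positivity
  rw [hasSum_iff_tendsto_nat_of_nonneg hnn]
  have key : ∀ N : ℕ, ∑ i ∈ Finset.range N,
      (1 : ℝ) / (((i : ℝ) + 1) * ((i : ℝ) + 2) * ((i : ℝ) + 3))
      = 1/4 - 1 / (2 * ((N : ℝ) + 1) * ((N : ℝ) + 2)) := by
    intro N
    induction N with
    | zero => norm_num
    | succ n ih =>
      rw [Finset.sum_range_succ, ih]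
      have h1 : ((n : ℝ) + 1) ≠ 0 := by positivity
      have h2 : ((n : ℝ) + 2) ≠ 0 := by positivity
      have h3 : ((n : ℝ) + 3) ≠ 0 := by positivity
      push_cast
      field_simp
      ring
  simp only [key]
  have hden : Tendsto (fun N : ℕ => 2 * ((N : ℝ) + 1) * ((N : ℝ) + 2)) atTop atTop := by
    apply tendsto_atTop_mono (f := fun N : ℕ => (N : ℝ))
    · intro N
      have : (0:ℝ) ≤ (N : ℝ) := Nat.cast_nonneg N
      nlinarith
    · exact tendsto_natCast_atTop_atTop
  have h0 := hden.inv_tendsto_atTop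
  have := (tendsto_const_nhds (x := (1/4 : ℝ)) (f := atTop)).sub h0
  simpa [one_div, Pi.inv_def] using this

private lemma hasSum_cubic {y : ℝ} (h1 : -1 < y) (h2 : y ≤ 1) :
    HasSum (fun n : ℕ => y ^ (n + 3) / (((n : ℝ) + 1) * ((n : ℝ) + 2) * ((n : ℝ) + 3)))
      (-(1/2) * (1 - y) ^ 2 * Real.log (1 - y) + 3/4 * y ^ 2 - y / 2) := by
  rcases eq_or_lt_of_le h2 with rfl | hlt
  · simp only [one_pow]
    convert hasSum_cubic_one using 1
    norm_num
  · exact hasSum_cubic_lt (abs_lt.mpr ⟨h1, hlt⟩)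

/-- The limiting density of the geometric free path length. -/
noncomputable def lorentzDensity (t : ℝ) : ℝ :=
  if t ≤ 1 then 6 / Real.pi ^ 2
  else 6 / Real.pi ^ 2 *
    (1 / t + 2 * (1 - 1 / t) ^ 2 * Real.log (1 - 1 / t)
      - 1 / 2 * (1 - 2 / t) ^ 2 * Real.log |1 - 2 / t|)

/-- For `t ≥ 2`, `g(t) = (24/(π² t²)) ∑_{n=1}^∞ (2ⁿ − 1)/(n(n+1)(n+2) tⁿ)`. -/
theorem lorentzDensity_series (t : ℝ) (ht : 2 ≤ t) :
    lorentzDensity t = 24 / (Real.pi ^ 2 * t ^ 2) *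
      ∑' n : ℕ, ((2 : ℝ) ^ (n + 1) - 1) /
        (((n : ℝ) + 1) * ((n : ℝ) + 2) * ((n : ℝ) + 3) * t ^ (n + 1)) := by
  have ht0 : (0 : ℝ) < t := by linarith
  have htne : t ≠ 0 := ne_of_gt ht0
  have hu1 : -1 < 1 / t := by
    have : (0:ℝ) ≤ 1 / t := by positivity
    linarith
  have hu2 : 1 / t ≤ 1 := by
    rw [div_le_one ht0]; linarith
  have hu2' : |1 / t| < 1 := by
    rw [abs_of_pos (by positivity)]
    rw [div_lt_one ht0]; linarith
  have hv1 : -1 < 2 / t := by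
    have : (0:ℝ) ≤ 2 / t := by positivity
    linarith
  have hv2 : 2 / t ≤ 1 := by
    rw [div_le_one ht0]; linarith
  have HB := hasSum_cubic_lt hu2'
  have HA := hasSum_cubic hv1 hv2
  have comb := (HA.mul_left (t ^ 2 / 4)).sub (HB.mul_left (t ^ 2))
  have hterm : ∀ n : ℕ,
      t ^ 2 / 4 * ((2 / t) ^ (n + 3) / (((n : ℝ) + 1) * ((n : ℝ) + 2) * ((n : ℝ) + 3)))
      - t ^ 2 * ((1 / t) ^ (n + 3) / (((n : ℝ) + 1) * ((n : ℝ) + 2) * ((n : ℝ) + 3)))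
      = ((2 : ℝ) ^ (n + 1) - 1) /
        (((n : ℝ) + 1) * ((n : ℝ) + 2) * ((n : ℝ) + 3) * t ^ (n + 1)) := by
    intro n
    have hn1 : ((n : ℝ) + 1) ≠ 0 := by positivity
    have hn2 : ((n : ℝ) + 2) ≠ 0 := by positivity
    have hn3 : ((n : ℝ) + 3) ≠ 0 := by positivity
    have htp : (t : ℝ) ^ (n + 1) ≠ 0 := pow_ne_zero _ htne
    rw [div_pow, div_pow]
    have e1 : t ^ (n + 3) = t ^ (n + 1) * t ^ 2 := by ring
    have e2 : (2 : ℝ) ^ (n + 3) = 2 ^ (n + 1) * 4 := by ring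
    rw [e1, e2]
    field_simp
    ring
  have hsum : HasSum (fun n : ℕ => ((2 : ℝ) ^ (n + 1) - 1) /
        (((n : ℝ) + 1) * ((n : ℝ) + 2) * ((n : ℝ) + 3) * t ^ (n + 1)))
      (t ^ 2 / 4 * (-(1/2) * (1 - 2 / t) ^ 2 * Real.log (1 - 2 / t) + 3/4 * (2 / t) ^ 2 - (2 / t) / 2)
        - t ^ 2 * (-(1/2) * (1 - 1 / t) ^ 2 * Real.log (1 - 1 / t) + 3/4 * (1 / t) ^ 2 - (1 / t) / 2)) := by
    convert comb using 1
    · rfl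
    funext n
    exact (hterm n).symm
  rw [hsum.tsum_eq]
  have habs : |1 - 2 / t| = 1 - 2 / t := abs_of_nonneg (by linarith [hv2])
  rw [lorentzDensity, if_neg (by push_neg; linarith), habs]
  have hpi : Real.pi ≠ 0 := Real.pi_ne_zero
  field_simp
  ring
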